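/- arXiv:2303.15810 — 4 statements merged into one kernel-verified Lean document; each statement's English description precedes it below -/
import Mathlib

section
/- Fix s and Q : A → ℝ on a finite set A with μ(a) > 0 for all a, and α > 0. The function U ↦ E_{a∼μ}[𝟙(1/2 + (Q(a) − U)/(2α) > 0)·(1/2 + (Q(a) − U)/(2α))²] + U/α is convex and differentiable in U, and its derivative vanishes exactly when E_{a∼μ}[max{1/2 + (Q(a) − U)/(2α), 0}] = 1; hence any minimizer U* satisfies the normalization equation of the χ²-regularized optimal policy. -/
lemma sq_max_hasDerivAt (x : ℝ) :
    HasDerivAt (fun y : ℝ => max y 0 ^ 2) (2 * max x 0) x := by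
  rcases lt_trichotomy x 0 with hx | hx | hx
  · have h0 : HasDerivAt (fun _ : ℝ => (0:ℝ)) 0 x := hasDerivAt_const x 0
    have heq : (fun y : ℝ => max y 0 ^ 2) =ᶠ[nhds x] (fun _ => (0:ℝ)) := by
      filter_upwards [Iio_mem_nhds hx] with y hy
      simp [max_eq_right (le_of_lt (Set.mem_Iio.mp hy))]
    have := h0.congr_of_eventuallyEq heq
    simpa [max_eq_right hx.le] using this
  · subst hx
    rw [hasDerivAt_iff_tendsto]
    have hb : ∀ y : ℝ, ‖y - 0‖⁻¹ * ‖max y 0 ^ 2 - max (0:ℝ) 0 ^ 2 - (y - 0) • (2 * max (0:ℝ) 0)‖ ≤ ‖y‖ := by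
      intro y
      rcases eq_or_ne y 0 with rfl | hy
      · simp
      · have h1 : max y 0 ≤ |y| := max_le (le_abs_self y) (abs_nonneg y)
        have h2 : ‖max y 0 ^ 2‖ ≤ ‖y‖ ^ 2 := by
          rw [Real.norm_eq_abs, Real.norm_eq_abs, abs_pow, abs_of_nonneg (le_max_right y 0)]
          exact pow_le_pow_left₀ (le_max_right y 0) h1 2
        simp only [sub_zero, max_self, mul_zero, smul_zero]
        calc ‖y‖⁻¹ * ‖max y 0 ^ 2 - 0 ^ 2‖ = ‖y‖⁻¹ * ‖max y 0 ^ 2‖ := by norm_num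
          _ ≤ ‖y‖⁻¹ * ‖y‖^2 :=
              mul_le_mul_of_nonneg_left h2 (inv_nonneg.mpr (norm_nonneg _))
          _ = ‖y‖ := by
              have : ‖y‖ ≠ 0 := norm_ne_zero_iff.mpr hy
              field_simp
    have hn : Filter.Tendsto (fun y : ℝ => ‖y‖) (nhds 0) (nhds 0) := by
      simpa using (continuous_norm (E := ℝ)).tendsto 0
    refine squeeze_zero (fun y => by positivity) hb hn
  · have h0 : HasDerivAt (fun y : ℝ => y ^ 2) (2 * x) x := by
      simpa using hasDerivAt_pow 2 x
    have heq : (fun y : ℝ => max y 0 ^ 2) =ᶠ[nhds x] (fun y => y ^ 2) := by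
      filter_upwards [Ioi_mem_nhds hx] with y hy
      simp [max_eq_left (le_of_lt (Set.mem_Ioi.mp hy))]
    have := h0.congr_of_eventuallyEq heq
    simpa [max_eq_left hx.le] using this

/-- The SQL `U`-objective
`U ↦ E_{a∼μ}[𝟙(1/2 + (Q a − U)/(2α) > 0) (1/2 + (Q a − U)/(2α))²] + U/α`
is convex and differentiable, and its derivative vanishes exactly when
`E_{a∼μ}[max (1/2 + (Q a − U)/(2α)) 0] = 1`. -/
theorem stmt_7 {A : Type*} [Fintype A]
    (Q μ : A → ℝ) (hμ : ∀ a, 0 < μ a) (hμ1 : ∑ a, μ a = 1)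
    (α : ℝ) (hα : 0 < α)
    (F : ℝ → ℝ)
    (hF : ∀ U : ℝ, F U =
      (∑ a, μ a * (if 0 < 1 / 2 + (Q a - U) / (2 * α) then
        (1 / 2 + (Q a - U) / (2 * α)) ^ 2 else 0)) + U / α) :
    ConvexOn ℝ Set.univ F ∧ Differentiable ℝ F ∧
      (∀ U : ℝ, deriv F U = 0 ↔
        ∑ a, μ a * max (1 / 2 + (Q a - U) / (2 * α)) 0 = 1) ∧
      (∀ U : ℝ, (∀ W : ℝ, F U ≤ F W) →
        ∑ a, μ a * max (1 / 2 + (Q a - U) / (2 * α)) 0 = 1) := by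
  have hα' : (2 * α) ≠ 0 := by positivity
  have hFeq : ∀ U : ℝ, F U =
      (∑ a, μ a * max (1 / 2 + (Q a - U) / (2 * α)) 0 ^ 2) + U / α := by
    intro U
    rw [hF U]
    congr 1
    apply Finset.sum_congr rfl
    intro a _
    congr 1
    set x := 1 / 2 + (Q a - U) / (2 * α) with hx
    rcases lt_or_ge 0 x with h | h
    · rw [if_pos h, max_eq_left h.le]
    · rw [if_neg (not_lt.mpr h), max_eq_right h, zero_pow (by norm_num)]
  set S : ℝ → ℝ := fun U => ∑ a, μ a * max (1 / 2 + (Q a - U) / (2 * α)) 0 with hS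
  have hderiv : ∀ U : ℝ, HasDerivAt F ((1 - S U) / α) U := by
    intro U
    have hinner : ∀ a : A, HasDerivAt (fun V : ℝ => 1 / 2 + (Q a - V) / (2 * α))
        (-1 / (2 * α)) U := by
      intro a
      have h1 : HasDerivAt (fun V : ℝ => Q a - V) (-1) U := by
        simpa using (hasDerivAt_id U).const_sub (Q a)
      exact (h1.div_const (2 * α)).const_add (1 / 2)
    have hterm : ∀ a : A, HasDerivAt
        (fun V : ℝ => μ a * max (1 / 2 + (Q a - V) / (2 * α)) 0 ^ 2)
        (μ a * (2 * max (1 / 2 + (Q a - U) / (2 * α)) 0 * (-1 / (2 * α)))) U := by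
      intro a
      exact ((sq_max_hasDerivAt _).comp U (hinner a)).const_mul (μ a)
    have hsum : HasDerivAt
        (fun V : ℝ => (∑ a, μ a * max (1 / 2 + (Q a - V) / (2 * α)) 0 ^ 2) + V / α)
        ((∑ a, μ a * (2 * max (1 / 2 + (Q a - U) / (2 * α)) 0 * (-1 / (2 * α)))) + 1 / α) U :=
      (HasDerivAt.fun_sum fun a _ => hterm a).add ((hasDerivAt_id U).div_const α)
    have hFe : F = fun V => (∑ a, μ a * max (1 / 2 + (Q a - V) / (2 * α)) 0 ^ 2) + V / α :=
      funext hFeq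
    rw [hFe]
    convert hsum using 1
    have hSU : S U = ∑ a, μ a * max (1 / 2 + (Q a - U) / (2 * α)) 0 := rfl
    have hterm2 : ∀ a : A, μ a * (2 * max (1 / 2 + (Q a - U) / (2 * α)) 0 * (-1 / (2 * α)))
        = -(μ a * max (1 / 2 + (Q a - U) / (2 * α)) 0 / α) := by
      intro a; field_simp
    rw [Finset.sum_congr rfl fun a _ => hterm2 a]
    rw [Finset.sum_neg_distrib, ← Finset.sum_div, ← hSU]
    field_simp
    ring
  have hdiff : Differentiable ℝ F := fun U => (hderiv U).differentiableAt
  have hderiv' : ∀ U, deriv F U = (1 - S U) / α := fun U => (hderiv U).deriv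
  have hSanti : Antitone S := by
    intro U V hUV
    apply Finset.sum_le_sum
    intro a _
    apply mul_le_mul_of_nonneg_left _ (hμ a).le
    have h2 : 1 / 2 + (Q a - V) / (2 * α) ≤ 1 / 2 + (Q a - U) / (2 * α) := by
      gcongr <;> linarith
    exact max_le_max h2 le_rfl
  have hmono : Monotone (deriv F) := by
    intro U V hUV
    rw [hderiv' U, hderiv' V]
    have h := hSanti hUV
    gcongr <;> linarith
  have hconv : ConvexOn ℝ Set.univ F := by
    apply MonotoneOn.convexOn_of_deriv convex_univ hdiff.continuous.continuousOn
      hdiff.differentiableOn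
    rw [interior_univ]
    exact hmono.monotoneOn _
  refine ⟨hconv, hdiff, ?_, ?_⟩
  · intro U
    rw [hderiv' U, div_eq_zero_iff]
    constructor
    · rintro (h | h)
      · have hSU : S U = 1 := by linarith
        exact hSU
      · exact absurd h (ne_of_gt hα)
    · intro h
      left
      have hSU : S U = 1 := h
      linarith
  · intro U hmin
    have hloc : IsLocalMin F U :=
      (isMinOn_univ_iff.mpr fun x => hmin x).isLocalMin Filter.univ_mem
    have hz : deriv F U = 0 := hloc.deriv_eq_zero
    rw [hderiv' U, div_eq_zero_iff] at hz
    rcases hz with h | h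
    · have hSU : S U = 1 := by linarith
      exact hSU
    · exact absurd h (ne_of_gt hα)
end

section
/- The normalization equation has a unique solution: for finite A, full-support μ, Q : A → ℝ, α > 0, and g : ℝ → ℝ continuous and strictly increasing on the set where it is positive (with g(y) → ∞ as y → ∞ and max{g(y),0} = 0 for y sufficiently small), the function u ↦ Σ_a μ(a)·max{g((Q(a) − u)/α), 0} is continuous, strictly decreasing where positive, tends to +∞ as u → −∞ and to 0 as u → +∞; hence there is exactly one u* with Σ_a μ(a)·max{g((Q(a) − u*)/α), 0} = 1. -/
open Filter

/-- Uniqueness of the normalizer: the map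
`u ↦ Σ_a μ a * max (g ((Q a − u)/α)) 0` is continuous, strictly decreasing where positive,
tends to `+∞` as `u → −∞` and to `0` as `u → +∞`; hence there is exactly one `u*` with
`Σ_a μ a * max (g ((Q a − u*)/α)) 0 = 1`. -/
theorem stmt_11 {A : Type*} [Fintype A] [Nonempty A]
    (Q μ : A → ℝ) (hμ : ∀ a, 0 < μ a) (hμ1 : ∑ a, μ a = 1)
    (α : ℝ) (hα : 0 < α)
    (g : ℝ → ℝ) (hgcont : Continuous g)
    (hgmono : StrictMonoOn g {y : ℝ | 0 < g y})
    (hgtop : Tendsto g atTop atTop)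
    (hgzero : ∃ y₀ : ℝ, ∀ y ≤ y₀, max (g y) 0 = 0) :
    Continuous (fun u : ℝ => ∑ a, μ a * max (g ((Q a - u) / α)) 0) ∧
    StrictAntiOn (fun u : ℝ => ∑ a, μ a * max (g ((Q a - u) / α)) 0)
      {u : ℝ | 0 < ∑ a, μ a * max (g ((Q a - u) / α)) 0} ∧
    Tendsto (fun u : ℝ => ∑ a, μ a * max (g ((Q a - u) / α)) 0) atBot atTop ∧
    Tendsto (fun u : ℝ => ∑ a, μ a * max (g ((Q a - u) / α)) 0) atTop (nhds 0) ∧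
    (∃! u : ℝ, ∑ a, μ a * max (g ((Q a - u) / α)) 0 = 1) := by
  classical
  set F : ℝ → ℝ := fun u : ℝ => ∑ a, μ a * max (g ((Q a - u) / α)) 0 with hF
  -- {y | 0 < g y} is upward closed
  have hup : ∀ ⦃y y' : ℝ⦄, 0 < g y → y ≤ y' → 0 < g y' := by
    intro y y' hy hle
    by_contra hneg
    push_neg at hneg
    have hlt : y < y' := lt_of_le_of_ne hle (by rintro rfl; exact absurd hy (not_lt.2 hneg))
    set S : Set ℝ := Set.Icc y y' ∩ {z | g z ≤ 0} with hS
    have hSclosed : IsClosed S := isClosed_Icc.inter (isClosed_Iic.preimage hgcont)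
    have hSne : S.Nonempty := ⟨y', ⟨⟨hle, le_rfl⟩, hneg⟩⟩
    have hSbdd : BddBelow S := ⟨y, fun z hz => hz.1.1⟩
    set z := sInf S with hz
    have hzS : z ∈ S := hSclosed.csInf_mem hSne hSbdd
    have hyz : y < z := by
      rcases lt_or_eq_of_le (le_csInf hSne fun w hw => hw.1.1) with h | h
      · exact h
      · rw [hz, ← h] at hzS; exact absurd hzS.2 (not_le.2 hy)
    have hpos : ∀ w, y ≤ w → w < z → 0 < g w := by
      intro w hyw hwz
      by_contra hgw
      push_neg at hgw
      have : w ∈ S := ⟨⟨hyw, hwz.le.trans hzS.1.2⟩, hgw⟩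
      exact absurd (csInf_le hSbdd this) (not_le.2 hwz)
    have hten : Tendsto g (nhdsWithin z (Set.Iio z)) (nhds (g z)) :=
      hgcont.continuousAt.tendsto.mono_left nhdsWithin_le_nhds
    have hev : ∀ᶠ w in nhdsWithin z (Set.Iio z), g y ≤ g w := by
      filter_upwards [Ioo_mem_nhdsLT_of_mem (Set.mem_Ioc.2 ⟨hyz, le_rfl⟩)] with w hw
      exact (hgmono hy (hpos w hw.1.le hw.2) hw.1).le
    have : g y ≤ g z := ge_of_tendsto hten hev
    exact absurd hzS.2 (not_le.2 (lt_of_lt_of_le hy this))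
  -- monotonicity of max (g ·) 0
  have hMmono : Monotone fun y : ℝ => max (g y) 0 := by
    intro y y' hle
    dsimp only
    rcases le_or_gt (g y) 0 with h | h
    · rw [max_eq_right h]; exact le_max_right _ _
    · have h' := hup h hle
      rw [max_eq_left h.le, max_eq_left h'.le]
      exact (hgmono.monotoneOn) h h' hle
  have hynn : ∀ y : ℝ, (0:ℝ) ≤ max (g y) 0 := fun y => le_max_right _ _
  have hdiv : ∀ a : A, ∀ ⦃u v : ℝ⦄, u ≤ v → (Q a - v) / α ≤ (Q a - u) / α := by
    intro a u v huv
    gcongr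
  have hterm : ∀ a : A, Antitone fun u : ℝ => μ a * max (g ((Q a - u) / α)) 0 := by
    intro a u v huv
    exact mul_le_mul_of_nonneg_left (hMmono (hdiv a huv)) (hμ a).le
  have hnonneg : ∀ u : ℝ, ∀ a : A, 0 ≤ μ a * max (g ((Q a - u) / α)) 0 := fun u a =>
    mul_nonneg (hμ a).le (hynn _)
  have hFanti : Antitone F := fun u v huv =>
    Finset.sum_le_sum fun a _ => hterm a huv
  have hFnn : ∀ u, 0 ≤ F u := fun u => Finset.sum_nonneg fun a _ => hnonneg u a
  -- continuity
  have hcont : Continuous F := by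
    apply continuous_finset_sum
    intro a _
    exact continuous_const.mul ((hgcont.comp (by fun_prop)).max continuous_const)
  -- strict antitone on positivity set
  have hanti : StrictAntiOn F {u : ℝ | 0 < F u} := by
    intro u hu v hv huv
    obtain ⟨a0, ha0⟩ : ∃ a, 0 < g ((Q a - v) / α) := by
      by_contra h
      push_neg at h
      have : F v = 0 := Finset.sum_eq_zero fun a _ => by
        rw [max_eq_right (h a), mul_zero]
      exact absurd this (ne_of_gt hv)
    apply Finset.sum_lt_sum (fun a _ => hterm a huv.le)
    refine ⟨a0, Finset.mem_univ _, ?_⟩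
    have hylt : (Q a0 - v) / α < (Q a0 - u) / α := by gcongr
    have hgu : 0 < g ((Q a0 - u) / α) := hup ha0 hylt.le
    have : max (g ((Q a0 - v) / α)) 0 < max (g ((Q a0 - u) / α)) 0 := by
      rw [max_eq_left ha0.le, max_eq_left hgu.le]
      exact hgmono ha0 hgu hylt
    exact mul_lt_mul_of_pos_left this (hμ a0)
  -- tendsto atBot atTop
  have htop : Tendsto F atBot atTop := by
    obtain a0 := Classical.arbitrary A
    have h1 : Tendsto (fun u : ℝ => (Q a0 - u) / α) atBot atTop := by
      apply Tendsto.atTop_div_const hα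
      exact tendsto_atTop_add_const_left _ _ tendsto_neg_atBot_atTop |>.congr
        (fun u => by ring)
    have h3 : Tendsto (fun u : ℝ => μ a0 * max (g ((Q a0 - u) / α)) 0) atBot atTop := by
      apply Tendsto.const_mul_atTop (hμ a0)
      exact tendsto_atTop_mono (fun u => le_max_left _ _) (hgtop.comp h1)
    exact tendsto_atTop_mono
      (fun u => Finset.single_le_sum (fun a _ => hnonneg u a) (Finset.mem_univ a0)) h3
  -- tendsto atTop (nhds 0)
  obtain ⟨y₀, hy₀⟩ := hgzero
  have hevzero : ∀ᶠ u in atTop, F u = 0 := by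
    have hne : (Finset.univ : Finset A).Nonempty := Finset.univ_nonempty
    filter_upwards [eventually_ge_atTop (Finset.univ.sup' hne fun a => Q a - α * y₀)] with u hu
    apply Finset.sum_eq_zero
    intro a _
    have hle : Q a - α * y₀ ≤ u := le_trans (Finset.le_sup' (fun a => Q a - α * y₀) (Finset.mem_univ a)) hu
    have : (Q a - u) / α ≤ y₀ := by
      rw [div_le_iff₀ hα]
      nlinarith
    rw [hy₀ _ this, mul_zero]
  have hzero : Tendsto F atTop (nhds 0) :=
    tendsto_const_nhds.congr' (hevzero.mono fun u h => h.symm)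
  -- existence and uniqueness
  have hexu : ∃! u : ℝ, F u = 1 := by
    obtain ⟨u1, hu1⟩ := (htop.eventually_ge_atTop 1).exists
    obtain ⟨u2, hu2⟩ := hevzero.exists
    set v2 := max u2 u1 with hv2
    have hFv2 : F v2 = 0 :=
      le_antisymm (hu2 ▸ hFanti (le_max_left _ _)) (hFnn v2)
    have hsub := intermediate_value_Icc' (le_max_right u2 u1) (hcont.continuousOn (s := Set.Icc u1 v2))
    have h1mem : (1:ℝ) ∈ Set.Icc (F v2) (F u1) := ⟨hFv2 ▸ zero_le_one, hu1⟩
    obtain ⟨u, _, huF⟩ := hsub h1mem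
    refine ⟨u, huF, ?_⟩
    intro w hw
    by_contra hne
    have hwpos : w ∈ {x : ℝ | 0 < F x} := by simp only [Set.mem_setOf_eq, hw]; norm_num
    have hupos : u ∈ {x : ℝ | 0 < F x} := by simp only [Set.mem_setOf_eq, huF]; norm_num
    rcases lt_or_gt_of_ne hne with h | h
    · have := hanti hwpos hupos h
      rw [hw, huF] at this; exact lt_irrefl _ this
    · have := hanti hupos hwpos h
      rw [hw, huF] at this; exact lt_irrefl _ this
  exact ⟨hcont, hanti, htop, hzero, hexu⟩
end

section
/- In the χ² case f(x) = x − 1, the optimal policy π*(a|s) = μ(a|s)·max{1/2 + (Q*(s,a) − U*(s))/(2α), 0} assigns zero probability exactly to those actions a with Q*(s,a) ≤ U*(s) − α, and its support shrinks (weakly) as α decreases with Q* and the relative ordering fixed. -/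
lemma chi2_rw (q u α : ℝ) (hα : 0 < α) :
    1 / 2 + (q - u) / (2 * α) = (q - (u - α)) / (2 * α) := by
  field_simp; ring

lemma chi2_pos_iff (q u α m : ℝ) (hm : 0 < m) (hα : 0 < α) :
    0 < m * max (1 / 2 + (q - u) / (2 * α)) 0 ↔ u - α < q := by
  rw [chi2_rw q u α hα]
  have h2 : (0:ℝ) < 2 * α := by linarith
  constructor
  · intro h
    have hmax : 0 < max ((q - (u - α)) / (2 * α)) 0 := by
      by_contra hc
      push_neg at hc
      nlinarith [mul_nonpos_of_nonneg_of_nonpos hm.le hc]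
    have he : 0 < (q - (u - α)) / (2 * α) := by
      by_contra hc
      push_neg at hc
      rw [max_eq_right hc] at hmax
      exact lt_irrefl 0 hmax
    rcases div_pos_iff.mp he with ⟨h1, _⟩ | ⟨_, h2⟩
    · linarith
    · linarith
  · intro h
    have : 0 < (q - (u - α)) / (2 * α) := div_pos (by linarith) h2
    rw [max_eq_left this.le]
    exact mul_pos hm this

/-- χ² case `f x = x − 1`: the optimal policy
`π* a = μ a * max (1/2 + (Q a − U)/(2α)) 0` assigns zero probability exactly to actions with
`Q a ≤ U − α`, and the support shrinks (weakly) as `α` decreases (with `Q*` fixed and each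
`U` the corresponding normalizer). -/
theorem stmt_12 {A : Type*} [Fintype A] [Nonempty A]
    (Q μ : A → ℝ) (hμ : ∀ a, 0 < μ a) (hμ1 : ∑ a, μ a = 1) :
    (∀ (α U : ℝ), 0 < α →
      (∑ a, μ a * max (1 / 2 + (Q a - U) / (2 * α)) 0 = 1) →
      ∀ a, μ a * max (1 / 2 + (Q a - U) / (2 * α)) 0 = 0 ↔ Q a ≤ U - α) ∧
    (∀ (α₁ α₂ U₁ U₂ : ℝ), 0 < α₁ → α₁ ≤ α₂ →
      (∑ a, μ a * max (1 / 2 + (Q a - U₁) / (2 * α₁)) 0 = 1) →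
      (∑ a, μ a * max (1 / 2 + (Q a - U₂) / (2 * α₂)) 0 = 1) →
      {a : A | 0 < μ a * max (1 / 2 + (Q a - U₁) / (2 * α₁)) 0} ⊆
        {a : A | 0 < μ a * max (1 / 2 + (Q a - U₂) / (2 * α₂)) 0}) := by
  constructor
  · intro α U hα _ a
    have h := chi2_pos_iff (Q a) U α (μ a) (hμ a) hα
    have hnn : 0 ≤ μ a * max (1 / 2 + (Q a - U) / (2 * α)) 0 :=
      mul_nonneg (hμ a).le (le_max_right _ _)
    constructor
    · intro hz
      by_contra hc
      push_neg at hc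
      exact absurd (h.mpr hc) (by rw [hz]; exact lt_irrefl 0)
    · intro hle
      rcases hnn.lt_or_eq with hlt | he
      · exact absurd (h.mp hlt) (not_lt.mpr hle)
      · exact he.symm
  · intro α₁ α₂ U₁ U₂ hα₁ h12 hs₁ hs₂
    have hα₂ : 0 < α₂ := lt_of_lt_of_le hα₁ h12
    -- key: threshold monotone: U₂ - α₂ ≤ U₁ - α₁
    have hthr : U₂ - α₂ ≤ U₁ - α₁ := by
      by_contra hc
      push_neg at hc
      -- then π₂ a ≤ π₁ a pointwise, with strict somewhere
      have hle : ∀ a : A, μ a * max (1 / 2 + (Q a - U₂) / (2 * α₂)) 0 ≤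
          μ a * max (1 / 2 + (Q a - U₁) / (2 * α₁)) 0 := by
        intro a
        apply mul_le_mul_of_nonneg_left _ (hμ a).le
        rw [chi2_rw (Q a) U₁ α₁ hα₁, chi2_rw (Q a) U₂ α₂ hα₂]
        apply max_le _ (le_max_right _ _)
        rcases le_or_gt (Q a) (U₂ - α₂) with h | h
        · calc (Q a - (U₂ - α₂)) / (2 * α₂) ≤ 0 :=
            div_nonpos_of_nonpos_of_nonneg (by linarith) (by linarith)
          _ ≤ _ := le_max_right _ _
        · refine le_trans ?_ (le_max_left _ _)
          apply div_le_div₀ (by linarith) (by linarith) (by linarith) (by linarith)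
      have hex : ∃ a : A, 0 < μ a * max (1 / 2 + (Q a - U₂) / (2 * α₂)) 0 := by
        by_contra hno
        push_neg at hno
        have : (∑ a, μ a * max (1 / 2 + (Q a - U₂) / (2 * α₂)) 0) ≤ 0 :=
          Finset.sum_nonpos (fun a _ => hno a)
        rw [hs₂] at this; linarith
      obtain ⟨a₀, ha₀⟩ := hex
      have hQ : U₂ - α₂ < Q a₀ := (chi2_pos_iff _ _ _ _ (hμ a₀) hα₂).mp ha₀
      have hstrict : μ a₀ * max (1 / 2 + (Q a₀ - U₂) / (2 * α₂)) 0 <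
          μ a₀ * max (1 / 2 + (Q a₀ - U₁) / (2 * α₁)) 0 := by
        apply mul_lt_mul_of_pos_left _ (hμ a₀)
        rw [chi2_rw (Q a₀) U₁ α₁ hα₁, chi2_rw (Q a₀) U₂ α₂ hα₂]
        have h1 : 0 < (Q a₀ - (U₁ - α₁)) / (2 * α₁) := div_pos (by linarith) (by linarith)
        have h2 : 0 < (Q a₀ - (U₂ - α₂)) / (2 * α₂) := div_pos (by linarith) (by linarith)
        rw [max_eq_left h1.le, max_eq_left h2.le]
        exact div_lt_div₀ (by linarith) (by linarith) (by linarith) (by linarith)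
      have hlt : (∑ a, μ a * max (1 / 2 + (Q a - U₂) / (2 * α₂)) 0) <
          (∑ a, μ a * max (1 / 2 + (Q a - U₁) / (2 * α₁)) 0) :=
        Finset.sum_lt_sum (fun a _ => hle a) ⟨a₀, Finset.mem_univ a₀, hstrict⟩
      rw [hs₁, hs₂] at hlt; linarith
    intro a ha
    simp only [Set.mem_setOf_eq] at ha ⊢
    have hQ : U₁ - α₁ < Q a := (chi2_pos_iff _ _ _ _ (hμ a) hα₁).mp ha
    exact (chi2_pos_iff _ _ _ _ (hμ a) hα₂).mpr (by linarith)
end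

section
/- Expectile characterization: for a real random variable X with finite support and τ ∈ (0,1), the unique minimizer v of E[|τ − 𝟙(X − v < 0)|·(X − v)²] satisfies the first-order condition τ·E[(X − v)₊] = (1−τ)·E[(v − X)₊], and as τ → 1⁻ the minimizer converges to max X. -/
lemma pt_rewrite (τ a u : ℝ) (h0 : 0 ≤ τ) (h1 : τ ≤ 1) :
    |τ - (if a - u < 0 then (1:ℝ) else 0)| * (a - u) ^ 2
      = τ * max (a - u) 0 ^ 2 + (1 - τ) * max (u - a) 0 ^ 2 := by
  rcases lt_or_ge (a - u) 0 with h | h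
  · rw [if_pos h, show |τ - 1| = 1 - τ by rw [abs_of_nonpos (by linarith)]; ring,
      max_eq_right h.le, max_eq_left (by linarith : (0:ℝ) ≤ u - a)]
    ring
  · rw [if_neg (not_lt.2 h), sub_zero, abs_of_nonneg h0,
      max_eq_left h, max_eq_right (by linarith : u - a ≤ 0)]
    ring

lemma pt_lower_max (τ a v w : ℝ) (h0 : 0 ≤ τ) (h1 : τ ≤ 1) :
    min τ (1 - τ) * (w - v) ^ 2
      ≤ (τ * max (a - w) 0 ^ 2 + (1 - τ) * max (w - a) 0 ^ 2)
        - (τ * max (a - v) 0 ^ 2 + (1 - τ) * max (v - a) 0 ^ 2)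
        + 2 * (w - v) * (τ * max (a - v) 0 - (1 - τ) * max (v - a) 0) := by
  have hc1 : min τ (1 - τ) ≤ τ := min_le_left _ _
  have hc2 : min τ (1 - τ) ≤ 1 - τ := min_le_right _ _
  rcases le_total a v with hv | hv <;> rcases le_total a w with hw | hw
  · rw [max_eq_right (by linarith : a - v ≤ 0), max_eq_left (by linarith : (0:ℝ) ≤ v - a),
      max_eq_right (by linarith : a - w ≤ 0), max_eq_left (by linarith : (0:ℝ) ≤ w - a)]
    nlinarith [sq_nonneg (w - v)]
  · rw [max_eq_right (by linarith : a - v ≤ 0), max_eq_left (by linarith : (0:ℝ) ≤ v - a),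
      max_eq_left (by linarith : (0:ℝ) ≤ a - w), max_eq_right (by linarith : w - a ≤ 0)]
    nlinarith [sq_nonneg (a - w), sq_nonneg (v - a),
      mul_nonneg (mul_nonneg (by linarith : (0:ℝ) ≤ 1 - τ - min τ (1-τ)) (by linarith : (0:ℝ) ≤ v - a)) (by linarith : (0:ℝ) ≤ a - w)]
  · rw [max_eq_left (by linarith : (0:ℝ) ≤ a - v), max_eq_right (by linarith : v - a ≤ 0),
      max_eq_right (by linarith : a - w ≤ 0), max_eq_left (by linarith : (0:ℝ) ≤ w - a)]
    nlinarith [sq_nonneg (w - a), sq_nonneg (a - v),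
      mul_nonneg (mul_nonneg (by linarith : (0:ℝ) ≤ τ - min τ (1-τ)) (by linarith : (0:ℝ) ≤ a - v)) (by linarith : (0:ℝ) ≤ w - a)]
  · rw [max_eq_left (by linarith : (0:ℝ) ≤ a - v), max_eq_right (by linarith : v - a ≤ 0),
      max_eq_left (by linarith : (0:ℝ) ≤ a - w), max_eq_right (by linarith : w - a ≤ 0)]
    nlinarith [sq_nonneg (w - v)]

lemma pt_upper_max (τ a v w : ℝ) (h0 : 0 ≤ τ) (h1 : τ ≤ 1) :
    (τ * max (a - w) 0 ^ 2 + (1 - τ) * max (w - a) 0 ^ 2)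
        - (τ * max (a - v) 0 ^ 2 + (1 - τ) * max (v - a) 0 ^ 2)
        + 2 * (w - v) * (τ * max (a - v) 0 - (1 - τ) * max (v - a) 0)
      ≤ max τ (1 - τ) * (w - v) ^ 2 := by
  have hc1 : τ ≤ max τ (1 - τ) := le_max_left _ _
  have hc2 : 1 - τ ≤ max τ (1 - τ) := le_max_right _ _
  rcases le_total a v with hv | hv <;> rcases le_total a w with hw | hw
  · rw [max_eq_right (by linarith : a - v ≤ 0), max_eq_left (by linarith : (0:ℝ) ≤ v - a),
      max_eq_right (by linarith : a - w ≤ 0), max_eq_left (by linarith : (0:ℝ) ≤ w - a)]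
    nlinarith [sq_nonneg (w - v)]
  · rw [max_eq_right (by linarith : a - v ≤ 0), max_eq_left (by linarith : (0:ℝ) ≤ v - a),
      max_eq_left (by linarith : (0:ℝ) ≤ a - w), max_eq_right (by linarith : w - a ≤ 0)]
    nlinarith [sq_nonneg (a - w), sq_nonneg (v - a),
      mul_nonneg (mul_nonneg (by linarith : (0:ℝ) ≤ max τ (1-τ) - (1 - τ)) (by linarith : (0:ℝ) ≤ v - a)) (by linarith : (0:ℝ) ≤ a - w),
      mul_nonneg (by linarith : (0:ℝ) ≤ v - a) (by linarith : (0:ℝ) ≤ a - w)]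
  · rw [max_eq_left (by linarith : (0:ℝ) ≤ a - v), max_eq_right (by linarith : v - a ≤ 0),
      max_eq_right (by linarith : a - w ≤ 0), max_eq_left (by linarith : (0:ℝ) ≤ w - a)]
    nlinarith [sq_nonneg (w - a), sq_nonneg (a - v),
      mul_nonneg (mul_nonneg (by linarith : (0:ℝ) ≤ max τ (1-τ) - τ) (by linarith : (0:ℝ) ≤ a - v)) (by linarith : (0:ℝ) ≤ w - a),
      mul_nonneg (by linarith : (0:ℝ) ≤ a - v) (by linarith : (0:ℝ) ≤ w - a)]
  · rw [max_eq_left (by linarith : (0:ℝ) ≤ a - v), max_eq_right (by linarith : v - a ≤ 0),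
      max_eq_left (by linarith : (0:ℝ) ≤ a - w), max_eq_right (by linarith : w - a ≤ 0)]
    nlinarith [sq_nonneg (w - v)]


lemma pt_lower (τ a v w : ℝ) (h0 : 0 ≤ τ) (h1 : τ ≤ 1) :
    min τ (1 - τ) * (w - v) ^ 2
      ≤ (|τ - (if a - w < 0 then 1 else 0)| * (a - w) ^ 2)
        - (|τ - (if a - v < 0 then 1 else 0)| * (a - v) ^ 2)
        + 2 * (w - v) * (τ * max (a - v) 0 - (1 - τ) * max (v - a) 0) := by
  rw [pt_rewrite τ a v h0 h1, pt_rewrite τ a w h0 h1]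
  exact pt_lower_max τ a v w h0 h1

lemma pt_upper (τ a v w : ℝ) (h0 : 0 ≤ τ) (h1 : τ ≤ 1) :
    (|τ - (if a - w < 0 then 1 else 0)| * (a - w) ^ 2)
        - (|τ - (if a - v < 0 then 1 else 0)| * (a - v) ^ 2)
        + 2 * (w - v) * (τ * max (a - v) 0 - (1 - τ) * max (v - a) 0)
      ≤ max τ (1 - τ) * (w - v) ^ 2 := by
  rw [pt_rewrite τ a v h0 h1, pt_rewrite τ a w h0 h1]
  exact pt_upper_max τ a v w h0 h1

lemma sum_expand {Ω : Type*} [Fintype Ω] (p X : Ω → ℝ) (τ v w k : ℝ) :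
    (∑ ω, p ω * (|τ - (if X ω - v < 0 then 1 else 0)| * (X ω - v) ^ 2))
        + k * (w - v) ^ 2 * (∑ ω, p ω)
        - 2 * (w - v) * (τ * ∑ ω, p ω * max (X ω - v) 0
            - (1 - τ) * ∑ ω, p ω * max (v - X ω) 0)
      = ∑ ω, p ω * ((|τ - (if X ω - v < 0 then 1 else 0)| * (X ω - v) ^ 2)
        + k * (w - v) ^ 2
        - 2 * (w - v) * (τ * max (X ω - v) 0 - (1 - τ) * max (v - X ω) 0)) := by
  rw [Finset.mul_sum _ _ τ, Finset.mul_sum _ _ (1 - τ), ← Finset.sum_sub_distrib,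
    Finset.mul_sum _ _ (k * (w - v) ^ 2), Finset.mul_sum _ _ (2 * (w - v)),
    ← Finset.sum_add_distrib, ← Finset.sum_sub_distrib]
  exact Finset.sum_congr rfl fun ω _ => by ring

lemma sum_lower {Ω : Type*} [Fintype Ω] (p X : Ω → ℝ) (hp : ∀ ω, 0 ≤ p ω)
    (hp1 : ∑ ω, p ω = 1) (τ v w : ℝ) (h0 : 0 ≤ τ) (h1 : τ ≤ 1) :
    (∑ ω, p ω * (|τ - (if X ω - v < 0 then 1 else 0)| * (X ω - v) ^ 2))
      + min τ (1 - τ) * (w - v) ^ 2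
      - 2 * (w - v) * (τ * ∑ ω, p ω * max (X ω - v) 0
          - (1 - τ) * ∑ ω, p ω * max (v - X ω) 0)
      ≤ ∑ ω, p ω * (|τ - (if X ω - w < 0 then 1 else 0)| * (X ω - w) ^ 2) := by
  have e := sum_expand p X τ v w (min τ (1 - τ))
  rw [hp1, mul_one] at e
  rw [e]
  refine Finset.sum_le_sum fun ω _ => mul_le_mul_of_nonneg_left ?_ (hp ω)
  have := pt_lower τ (X ω) v w h0 h1
  linarith

lemma sum_upper {Ω : Type*} [Fintype Ω] (p X : Ω → ℝ) (hp : ∀ ω, 0 ≤ p ω)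
    (hp1 : ∑ ω, p ω = 1) (τ v w : ℝ) (h0 : 0 ≤ τ) (h1 : τ ≤ 1) :
    (∑ ω, p ω * (|τ - (if X ω - w < 0 then 1 else 0)| * (X ω - w) ^ 2))
      ≤ (∑ ω, p ω * (|τ - (if X ω - v < 0 then 1 else 0)| * (X ω - v) ^ 2))
        + max τ (1 - τ) * (w - v) ^ 2
        - 2 * (w - v) * (τ * ∑ ω, p ω * max (X ω - v) 0
            - (1 - τ) * ∑ ω, p ω * max (v - X ω) 0) := by
  have e := sum_expand p X τ v w (max τ (1 - τ))
  rw [hp1, mul_one] at e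
  rw [e]
  refine Finset.sum_le_sum fun ω _ => mul_le_mul_of_nonneg_left ?_ (hp ω)
  have := pt_upper τ (X ω) v w h0 h1
  linarith

open Filter

/-- Expectile characterization: for a finitely supported random variable `X` and
`τ ∈ (0,1)`, the expectile loss `v ↦ E[|τ − 𝟙(X − v < 0)| (X − v)²]` has a unique minimizer,
any minimizer satisfies `τ E[(X − v)₊] = (1 − τ) E[(v − X)₊]`, and as `τ → 1⁻` the minimizer
converges to `max X`. -/
theorem stmt_18 {Ω : Type*} [Fintype Ω] [Nonempty Ω]
    (p : Ω → ℝ) (hp : ∀ ω, 0 < p ω) (hp1 : ∑ ω, p ω = 1)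
    (X : Ω → ℝ) :
    (∀ τ ∈ Set.Ioo (0 : ℝ) 1, ∃! v : ℝ, ∀ w : ℝ,
      (∑ ω, p ω * (|τ - (if X ω - v < 0 then 1 else 0)| * (X ω - v) ^ 2)) ≤
        ∑ ω, p ω * (|τ - (if X ω - w < 0 then 1 else 0)| * (X ω - w) ^ 2)) ∧
    (∀ τ ∈ Set.Ioo (0 : ℝ) 1, ∀ v : ℝ,
      (∀ w : ℝ,
        (∑ ω, p ω * (|τ - (if X ω - v < 0 then 1 else 0)| * (X ω - v) ^ 2)) ≤
          ∑ ω, p ω * (|τ - (if X ω - w < 0 then 1 else 0)| * (X ω - w) ^ 2)) →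
      τ * ∑ ω, p ω * max (X ω - v) 0 = (1 - τ) * ∑ ω, p ω * max (v - X ω) 0) ∧
    (∀ m : ℝ → ℝ,
      (∀ τ ∈ Set.Ioo (0 : ℝ) 1, ∀ w : ℝ,
        (∑ ω, p ω * (|τ - (if X ω - m τ < 0 then 1 else 0)| * (X ω - m τ) ^ 2)) ≤
          ∑ ω, p ω * (|τ - (if X ω - w < 0 then 1 else 0)| * (X ω - w) ^ 2)) →
      Tendsto m (nhdsWithin 1 (Set.Iio 1)) (nhds (⨆ ω, X ω))) := by
  have hp0 : ∀ ω, 0 ≤ p ω := fun ω => (hp ω).le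
  have hbddA : BddAbove (Set.range X) := (Set.finite_range X).bddAbove
  have hbddB : BddBelow (Set.range X) := (Set.finite_range X).bddBelow
  set M := ⨆ ω, X ω with hMdef
  set m₀ := ⨅ ω, X ω with hm₀def
  have hXM : ∀ ω, X ω ≤ M := fun ω => le_ciSup hbddA ω
  have hmX : ∀ ω, m₀ ≤ X ω := fun ω => ciInf_le hbddB ω
  obtain ⟨ω₀, hω₀⟩ := Finite.exists_max X
  have hM0 : X ω₀ = M := le_antisymm (hXM ω₀) (ciSup_le hω₀)
  have hm0M : m₀ ≤ M := le_trans (hmX ω₀) (hXM ω₀)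
  -- the first-order condition for any minimizer
  have hFOC : ∀ τ ∈ Set.Ioo (0 : ℝ) 1, ∀ v : ℝ,
      (∀ w : ℝ,
        (∑ ω, p ω * (|τ - (if X ω - v < 0 then 1 else 0)| * (X ω - v) ^ 2)) ≤
          ∑ ω, p ω * (|τ - (if X ω - w < 0 then 1 else 0)| * (X ω - w) ^ 2)) →
      τ * ∑ ω, p ω * max (X ω - v) 0 = (1 - τ) * ∑ ω, p ω * max (v - X ω) 0 := by
    rintro τ ⟨hτ0, hτ1⟩ v hv
    set G := τ * ∑ ω, p ω * max (X ω - v) 0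
        - (1 - τ) * ∑ ω, p ω * max (v - X ω) 0 with hG
    set C := max τ (1 - τ) with hC
    have hCpos : 0 < C := lt_of_lt_of_le hτ0 (le_max_left _ _)
    have h := sum_upper p X hp0 hp1 τ v (v + G / C) hτ0.le hτ1.le
    have h2 := hv (v + G / C)
    rw [← hG, ← hC] at h
    have e : C * (v + G / C - v) ^ 2 - 2 * (v + G / C - v) * G = -(G ^ 2 / C) := by
      field_simp
      ring
    have h3 : G ^ 2 / C ≤ 0 := by linarith
    have h4 : G ^ 2 ≤ 0 := by
      have := (div_le_iff₀ hCpos).mp h3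
      simpa using this
    have h5 : G = 0 := by
      have := le_antisymm h4 (sq_nonneg G)
      exact pow_eq_zero_iff (two_ne_zero).elim |>.mp this
    have := hG.symm.trans h5
    linarith
  refine ⟨?_, hFOC, ?_⟩
  · -- existence and uniqueness of minimizer
    rintro τ ⟨hτ0, hτ1⟩
    -- find a root of G by IVT
    set g : ℝ → ℝ := fun v => τ * ∑ ω, p ω * max (X ω - v) 0
        - (1 - τ) * ∑ ω, p ω * max (v - X ω) 0 with hgdef
    have hgc : Continuous g := by
      apply Continuous.sub
      · exact continuous_const.mul (continuous_finset_sum _ fun ω _ =>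
          continuous_const.mul ((continuous_const.sub continuous_id).max continuous_const))
      · exact continuous_const.mul (continuous_finset_sum _ fun ω _ =>
          continuous_const.mul ((continuous_id.sub continuous_const).max continuous_const))
    have hglo : 0 ≤ g (m₀ - 1) := by
      have hB : (∑ ω, p ω * max (m₀ - 1 - X ω) 0) = 0 :=
        Finset.sum_eq_zero fun ω _ => by
          rw [max_eq_right (by linarith [hmX ω] : m₀ - 1 - X ω ≤ 0), mul_zero]
      have hA : 0 ≤ ∑ ω, p ω * max (X ω - (m₀ - 1)) 0 :=
        Finset.sum_nonneg fun ω _ => mul_nonneg (hp0 ω) (le_max_right _ _)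
      simp only [hgdef]
      rw [hB, mul_zero, sub_zero]
      exact mul_nonneg hτ0.le hA
    have hghi : g (M + 1) ≤ 0 := by
      have hA : (∑ ω, p ω * max (X ω - (M + 1)) 0) = 0 :=
        Finset.sum_eq_zero fun ω _ => by
          rw [max_eq_right (by linarith [hXM ω] : X ω - (M + 1) ≤ 0), mul_zero]
      have hB : 0 ≤ ∑ ω, p ω * max (M + 1 - X ω) 0 :=
        Finset.sum_nonneg fun ω _ => mul_nonneg (hp0 ω) (le_max_right _ _)
      simp only [hgdef]
      rw [hA, mul_zero, zero_sub, neg_nonpos]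
      exact mul_nonneg (by linarith) hB
    have hmem : (0 : ℝ) ∈ Set.Icc (g (M + 1)) (g (m₀ - 1)) := ⟨hghi, hglo⟩
    obtain ⟨v, _, hvroot⟩ :=
      intermediate_value_Icc' (by linarith : m₀ - 1 ≤ M + 1) hgc.continuousOn hmem
    have hvroot' : τ * (∑ ω, p ω * max (X ω - v) 0)
        - (1 - τ) * (∑ ω, p ω * max (v - X ω) 0) = 0 := hvroot
    have hcpos : 0 < min τ (1 - τ) := lt_min hτ0 (by linarith)
    refine ⟨v, ?_, ?_⟩
    · intro w
      have h := sum_lower p X hp0 hp1 τ v w hτ0.le hτ1.le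
      rw [hvroot', mul_zero] at h
      nlinarith [mul_nonneg hcpos.le (sq_nonneg (w - v))]
    · intro v' hv'
      have h := sum_lower p X hp0 hp1 τ v v' hτ0.le hτ1.le
      rw [hvroot', mul_zero] at h
      have h2 := hv' v
      have hx : min τ (1 - τ) * (v' - v) ^ 2 ≤ min τ (1 - τ) * 0 := by
        rw [mul_zero]; linarith
      have hy : (v' - v) ^ 2 ≤ 0 := le_of_mul_le_mul_left hx hcpos
      have hz : (v' - v) ^ 2 = 0 := le_antisymm hy (sq_nonneg _)
      have := pow_eq_zero_iff (two_ne_zero).elim |>.mp hz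
      linarith
  · -- convergence as τ → 1⁻
    intro m hm
    have hFOC' : ∀ τ, 0 < τ → τ < 1 →
        τ * ∑ ω, p ω * max (X ω - m τ) 0
          = (1 - τ) * ∑ ω, p ω * max (m τ - X ω) 0 :=
      fun τ h0 h1 => hFOC τ ⟨h0, h1⟩ (m τ) (hm τ ⟨h0, h1⟩)
    rw [Metric.tendsto_nhdsWithin_nhds]
    intro ε hε
    set R := M - m₀ with hR
    have hRpos : 0 ≤ R := by linarith
    have hp₀ : 0 < p ω₀ := hp ω₀
    have hden : 0 < R + p ω₀ * ε := by positivity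
    refine ⟨min (1 / 2) (p ω₀ * ε / (R + p ω₀ * ε)), lt_min (by norm_num)
      (div_pos (mul_pos hp₀ hε) hden), ?_⟩
    intro τ hτIio hdist
    have hτ1 : τ < 1 := hτIio
    rw [Real.dist_eq, abs_of_nonpos (by linarith)] at hdist
    have hdist' : 1 - τ < min (1 / 2) (p ω₀ * ε / (R + p ω₀ * ε)) := by linarith
    have hτhalf : 1 / 2 < τ := by
      have := min_le_left (1/2 : ℝ) (p ω₀ * ε / (R + p ω₀ * ε)); linarith
    have hτ0 : 0 < τ := by linarith
    have hfoc := hFOC' τ hτ0 hτ1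
    have hle : m τ ≤ M := by
      by_contra hgt
      push_neg at hgt
      have hA0 : (∑ ω, p ω * max (X ω - m τ) 0) = 0 :=
        Finset.sum_eq_zero fun ω _ => by
          rw [max_eq_right (by linarith [hXM ω] : X ω - m τ ≤ 0), mul_zero]
      have hBpos : 0 < ∑ ω, p ω * max (m τ - X ω) 0 :=
        Finset.sum_pos (fun ω _ => mul_pos (hp ω)
          (lt_max_iff.2 (Or.inl (by linarith [hXM ω])))) ⟨ω₀, Finset.mem_univ ω₀⟩
      rw [hA0, mul_zero] at hfoc
      nlinarith
    have hgtε : M - ε < m τ := by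
      by_contra hle2
      push_neg at hle2
      have hAge : p ω₀ * ε ≤ ∑ ω, p ω * max (X ω - m τ) 0 := by
        have h1 : p ω₀ * ε ≤ p ω₀ * max (X ω₀ - m τ) 0 := by
          apply mul_le_mul_of_nonneg_left _ hp₀.le
          exact le_trans (by rw [hM0] at *; linarith) (le_max_left _ _)
        exact le_trans h1 (Finset.single_le_sum
          (f := fun ω => p ω * max (X ω - m τ) 0)
          (fun ω _ => mul_nonneg (hp0 ω) (le_max_right _ _)) (Finset.mem_univ ω₀))
      have hBle : (∑ ω, p ω * max (m τ - X ω) 0) ≤ R := by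
        calc (∑ ω, p ω * max (m τ - X ω) 0) ≤ ∑ ω, p ω * R :=
              Finset.sum_le_sum fun ω _ => mul_le_mul_of_nonneg_left
                (max_le (by linarith [hmX ω]) hRpos) (hp0 ω)
          _ = R := by rw [← Finset.sum_mul, hp1, one_mul]
      have key : τ * (p ω₀ * ε) ≤ (1 - τ) * R := by
        calc τ * (p ω₀ * ε) ≤ τ * ∑ ω, p ω * max (X ω - m τ) 0 :=
              mul_le_mul_of_nonneg_left hAge hτ0.le
          _ = (1 - τ) * ∑ ω, p ω * max (m τ - X ω) 0 := hfoc
          _ ≤ (1 - τ) * R := mul_le_mul_of_nonneg_left hBle (by linarith)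
      have hδ2 : 1 - τ < p ω₀ * ε / (R + p ω₀ * ε) :=
        lt_of_lt_of_le hdist' (min_le_right _ _)
      rw [lt_div_iff₀ hden] at hδ2
      nlinarith
    rw [Real.dist_eq, abs_lt]
    constructor <;> linarith
end
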